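/- Fix P₀ > 0 and P_c > 0, and suppose the quantity P_LO* = 2a₁₂P₀(a₂₃P_c + a₁₂P₀)·(√((X₀+X₂)² + 3X₂²) − X₀ − X₂)/(3a₃₄X₂²) is strictly positive. Then the DIOD thermal-noise objective g(P_LO) = P₁(P_LO)²·κ₁(P_LO)², viewed as a function of the local-oscillator power P_LO on (0, ∞), has derivative zero at P_LO = P_LO*; i.e., P_LO* is a stationary point of P₁²κ₁². -/

import Mathlib

open Set

/-- `X₁ = 2a₁₂²P₀² + 2a₁₂P₀(a₃₄P_LO + a₂₃P_c) + γ₂²a₃₄P_LO`. -/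
noncomputable def X1fun (a12 a23 a34 γ2 P0 Pc PLO : ℝ) : ℝ :=
  2 * a12 ^ 2 * P0 ^ 2 + 2 * a12 * P0 * (a34 * PLO + a23 * Pc) + γ2 ^ 2 * a34 * PLO

/-- Transmitted probe power `P₁ = P₀·exp(−X₀a₃₄P_LO/X₁)` at zero detuning. -/
noncomputable def P1fun (a12 a23 a34 γ2 X0 P0 Pc PLO : ℝ) : ℝ :=
  P0 * Real.exp (-(X0 * a34 * PLO) / X1fun a12 a23 a34 γ2 P0 Pc PLO)

/-- RF-to-optical slope `κ₁ = C₀·√(a₃₄P_LO)·a₁₂P₀·(a₂₃P_c + a₁₂P₀)/X₁²`. -/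
noncomputable def κ1fun (a12 a23 a34 γ2 C0 P0 Pc PLO : ℝ) : ℝ :=
  C0 * Real.sqrt (a34 * PLO) * (a12 * P0) * (a23 * Pc + a12 * P0)
    / (X1fun a12 a23 a34 γ2 P0 Pc PLO) ^ 2

/-- `X₂ = 2a₁₂P₀ + γ₂²`. -/
noncomputable def X2fun (a12 γ2 P0 : ℝ) : ℝ := 2 * a12 * P0 + γ2 ^ 2

theorem diod_thermal_noise_stationary_LO_power
    (a12 a23 a34 γ2 X0 C0 : ℝ)
    (ha12 : 0 < a12) (ha23 : 0 < a23) (ha34 : 0 < a34) (hγ2 : 0 < γ2)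
    (hX0 : 0 < X0) (hC0 : 0 < C0)
    (P0 Pc : ℝ) (hP0 : 0 < P0) (hPc : 0 < Pc)
    (PLOstar : ℝ)
    (hPLOstar : PLOstar =
      2 * a12 * P0 * (a23 * Pc + a12 * P0)
        * (Real.sqrt ((X0 + X2fun a12 γ2 P0) ^ 2 + 3 * (X2fun a12 γ2 P0) ^ 2)
            - X0 - X2fun a12 γ2 P0)
        / (3 * a34 * (X2fun a12 γ2 P0) ^ 2))
    (hpos : 0 < PLOstar) :
    HasDerivAt
      (fun PLO => (P1fun a12 a23 a34 γ2 X0 P0 Pc PLO) ^ 2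
        * (κ1fun a12 a23 a34 γ2 C0 P0 Pc PLO) ^ 2)
      0 PLOstar := by
  have hX2 : 0 < X2fun a12 γ2 P0 := by unfold X2fun; positivity
  set X2 := X2fun a12 γ2 P0 with hX2def
  set A : ℝ := 2*a12*P0*(a23*Pc+a12*P0) with hA
  have hApos : 0 < A := by rw [hA]; positivity
  set B : ℝ := a34 * X2 with hB
  have hBpos : 0 < B := by rw [hB]; positivity
  have hX1eq : ∀ P : ℝ, X1fun a12 a23 a34 γ2 P0 Pc P = A + B*P := by
    intro P
    simp only [X1fun, hA, hB, hX2def, X2fun]; ring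
  have hX1pos : 0 < A + B*PLOstar := by positivity
  have hX1ne : (A + B*PLOstar) ≠ 0 := ne_of_gt hX1pos
  -- derivative of the affine denominator
  have hX1d : HasDerivAt (fun P : ℝ => A + B*P) B PLOstar := by
    simpa using ((hasDerivAt_id PLOstar).const_mul B).const_add A
  -- exponent
  set m : ℝ := (a12*P0)^2*(a23*Pc+a12*P0)^2 with hm
  set E1 : ℝ := Real.exp (-(X0*a34*PLOstar)/(A+B*PLOstar)) with hE1
  have hnum : HasDerivAt (fun P : ℝ => -(X0*a34*P)) (-(X0*a34)) PLOstar := by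
    simpa using ((hasDerivAt_id PLOstar).const_mul (X0*a34)).fun_neg
  have he : HasDerivAt (fun P : ℝ => -(X0*a34*P)/(A+B*P))
      ((-(X0*a34)*(A+B*PLOstar) - -(X0*a34*PLOstar)*B)/(A+B*PLOstar)^2) PLOstar :=
    hnum.div hX1d hX1ne
  have hexp : HasDerivAt (fun P : ℝ => Real.exp (-(X0*a34*P)/(A+B*P)))
      (E1 * ((-(X0*a34)*(A+B*PLOstar) - -(X0*a34*PLOstar)*B)/(A+B*PLOstar)^2)) PLOstar := by
    simpa [hE1] using he.exp
  have hexp2 : HasDerivAt (fun P : ℝ => (Real.exp (-(X0*a34*P)/(A+B*P)))^2)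
      ((2:ℕ) * E1^1 * (E1 * ((-(X0*a34)*(A+B*PLOstar) - -(X0*a34*PLOstar)*B)/(A+B*PLOstar)^2)))
      PLOstar := by
    simpa using hexp.fun_pow 2
  -- the rational part
  have hden4 : HasDerivAt (fun P : ℝ => (A+B*P)^4)
      ((4:ℕ) * (A+B*PLOstar)^3 * B) PLOstar := by
    simpa using hX1d.fun_pow 4
  have hnum2 : HasDerivAt (fun P : ℝ => C0^2 * (a34*P) * m) (C0^2 * a34 * m) PLOstar := by
    have := ((hasDerivAt_id PLOstar).const_mul (C0^2 * a34)).mul_const m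
    simpa [mul_comm, mul_assoc, mul_left_comm] using this
  have hv : HasDerivAt (fun P : ℝ => C0^2 * (a34*P) * m / (A+B*P)^4)
      ((C0^2 * a34 * m * (A+B*PLOstar)^4
        - C0^2 * (a34*PLOstar) * m * ((4:ℕ) * (A+B*PLOstar)^3 * B)) / ((A+B*PLOstar)^4)^2)
      PLOstar := hnum2.div hden4 (by positivity)
  -- full auxiliary function
  have hfull : HasDerivAt
      (fun P : ℝ => P0^2 * ((Real.exp (-(X0*a34*P)/(A+B*P)))^2
        * (C0^2 * (a34*P) * m / (A+B*P)^4)))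
      (P0^2 * (((2:ℕ) * E1^1 * (E1 * ((-(X0*a34)*(A+B*PLOstar) - -(X0*a34*PLOstar)*B)/(A+B*PLOstar)^2)))
          * (C0^2 * (a34*PLOstar) * m / (A+B*PLOstar)^4)
        + E1^2 * ((C0^2 * a34 * m * (A+B*PLOstar)^4
          - C0^2 * (a34*PLOstar) * m * ((4:ℕ) * (A+B*PLOstar)^3 * B)) / ((A+B*PLOstar)^4)^2)))
      PLOstar := ((hexp2.mul hv).const_mul (P0^2))
  -- key quadratic identity
  have hs : (Real.sqrt ((X0 + X2)^2 + 3*X2^2))^2 = (X0 + X2)^2 + 3*X2^2 :=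
    Real.sq_sqrt (by positivity)
  set s := Real.sqrt ((X0 + X2)^2 + 3*X2^2) with hsdef
  have key : (A+B*PLOstar)^2 - 4*B*PLOstar*(A+B*PLOstar) - 2*X0*a34*A*PLOstar = 0 := by
    have hP3 : 3 * a34 * X2^2 * PLOstar = A * (s - X0 - X2) := by
      rw [hPLOstar]; field_simp
    rw [hB]
    have key9 : (9*a34^2*X2^4) * ((A+a34*X2*PLOstar)^2 - 4*(a34*X2)*PLOstar*(A+a34*X2*PLOstar)
        - 2*X0*a34*A*PLOstar) = 0 := by
      linear_combination (-(3*a34^2*X2^2*(2*A*(s-X0-X2) + (3*a34*X2^2*PLOstar - A*(s-X0-X2)))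
        + 2*A*a34*X2*(3*a34*X2^2) + 2*X0*a34*A*(3*a34*X2^2))) * hP3
        + (-(3*a34^2*X2^2*A^2)) * hs
    have h9 : (9*a34^2*X2^4 : ℝ) ≠ 0 := by positivity
    have := (mul_eq_zero.mp key9).resolve_left h9
    linarith [this]
  -- the derivative value is zero
  have hzero : (P0^2 * (((2:ℕ) * E1^1 * (E1 * ((-(X0*a34)*(A+B*PLOstar) - -(X0*a34*PLOstar)*B)/(A+B*PLOstar)^2)))
          * (C0^2 * (a34*PLOstar) * m / (A+B*PLOstar)^4)
        + E1^2 * ((C0^2 * a34 * m * (A+B*PLOstar)^4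
          - C0^2 * (a34*PLOstar) * m * ((4:ℕ) * (A+B*PLOstar)^3 * B)) / ((A+B*PLOstar)^4)^2))) = 0 := by
    have h6 : (A+B*PLOstar)^6 ≠ 0 := by positivity
    have hE1ne : E1 ≠ 0 := Real.exp_ne_zero _
    clear_value X2 A B m E1 s
    have hd : (P0^2 * (((2:ℕ) * E1^1 * (E1 * ((-(X0*a34)*(A+B*PLOstar) - -(X0*a34*PLOstar)*B)/(A+B*PLOstar)^2)))
          * (C0^2 * (a34*PLOstar) * m / (A+B*PLOstar)^4)
        + E1^2 * ((C0^2 * a34 * m * (A+B*PLOstar)^4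
          - C0^2 * (a34*PLOstar) * m * ((4:ℕ) * (A+B*PLOstar)^3 * B)) / ((A+B*PLOstar)^4)^2)))
        = P0^2*E1^2*C0^2*m*a34/(A+B*PLOstar)^6
          * ((A+B*PLOstar)^2 - 4*B*PLOstar*(A+B*PLOstar) - 2*X0*a34*A*PLOstar) := by
      field_simp
      ring
    rw [hd, key, mul_zero]
  rw [← hzero]
  apply hfull.congr_of_eventuallyEq
  filter_upwards [Ioi_mem_nhds hpos] with P hP
  have hP' : (0:ℝ) < P := hP
  have hsq : Real.sqrt (a34*P) ^ 2 = a34*P := Real.sq_sqrt (by positivity)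
  simp only [P1fun, κ1fun, hX1eq, mul_pow, div_pow]
  rw [hsq, hm]
  ring
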